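/- Let M be a commutative cancellative monoid satisfying the ascending chain condition on principal ideals (ACCP). If S ⊆ M is a submonoid with S^× = M^× ∩ S, then S satisfies the ACCP. -/

import Mathlib

/-- A commutative monoid satisfies the ACCP if every ascending chain of principal
ideals `f n * M ⊆ f (n+1) * M` (i.e. `f (n+1) ∣ f n`) stabilizes
(i.e. eventually `f N * M = f n * M`, which given the chain amounts to `f N ∣ f n`). -/
def MulACCP (M : Type*) [CommMonoid M] : Prop :=
  ∀ f : ℕ → M, (∀ n, f (n + 1) ∣ f n) → ∃ N, ∀ n ≥ N, f N ∣ f n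

theorem stmt1 {M : Type*} [CancelCommMonoid M] (hM : MulACCP M)
    (S : Submonoid M) (hS : ∀ x ∈ S, IsUnit x → ∃ y ∈ S, x * y = 1) :
    MulACCP S := by
  intro f hf
  obtain ⟨N, hN⟩ := hM (fun n => (f n : M)) (fun n => by
    obtain ⟨c, hc⟩ := hf n
    exact ⟨c, by simpa using congrArg (Subtype.val) hc⟩)
  refine ⟨N, fun n hn => ?_⟩
  -- f n ∣ f N in S
  have hdvd : ∀ k, f (N + k) ∣ f N := by
    intro k
    induction k with
    | zero => exact dvd_refl _
    | succ k ih => exact dvd_trans (hf (N + k)) ih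
  obtain ⟨k, rfl⟩ := Nat.exists_eq_add_of_le hn
  obtain ⟨d, hd⟩ := hdvd k
  obtain ⟨c, hc⟩ := hN (N + k) (Nat.le_add_right N k)
  have hcd : c * (d : M) = 1 := by
    have h1 : (f N : M) = (f (N + k) : M) * d := congrArg Subtype.val hd
    have h2 : (f N : M) * 1 = (f N : M) * (c * d) := by
      rw [mul_one, ← mul_assoc, ← hc, ← h1]
    exact (mul_left_cancel h2).symm
  have hdu : IsUnit (d : M) := IsUnit.of_mul_eq_one _ (by rw [mul_comm]; exact hcd)
  obtain ⟨y, hyS, hy⟩ := hS d d.2 hdu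
  have hcy : c = y := by
    calc c = c * ((d : M) * y) := by rw [hy, mul_one]
    _ = (c * d) * y := by rw [mul_assoc]
    _ = y := by rw [hcd, one_mul]
  exact ⟨⟨y, hyS⟩, Subtype.ext (by push_cast; rw [← hcy]; exact hc)⟩
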